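/- Let P ⊂ R^d be a polytope with n distinct vertices v_1,...,v_n (n ≥ 3) and let φ(p) = Σ_i p_i v_i for p ∈ Δ_n. For each vertex v_k there exists ε > 0 such that for every u ∈ P with ‖u - v_k‖ < ε and every p ∈ Δ_n with φ(p) = u, the index k is the unique mode of p, i.e., p_k > p_i for all i ≠ k. -/

import Mathlib

/-- Near each vertex of a polytope there is an ε-ball on which every embedded distribution has
that vertex's outcome as its unique mode. -/
theorem unique_mode_near_vertex (d n : ℕ) (hn : 3 ≤ n)
    (v : Fin n → EuclideanSpace ℝ (Fin d)) (hinj : Function.Injective v)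
    (hext : ∀ i, v i ∉ convexHull ℝ (Set.range v \ {v i})) (k : Fin n) :
    ∃ ε > 0, ∀ u ∈ convexHull ℝ (Set.range v), ‖u - v k‖ < ε →
      ∀ p ∈ stdSimplex ℝ (Fin n), (∑ i, p i • v i) = u → ∀ i, i ≠ k → p i < p k := by
  set S : Set (EuclideanSpace ℝ (Fin d)) := convexHull ℝ (Set.range v \ {v k}) with hS
  have hfin : (Set.range v \ {v k}).Finite := (Set.finite_range v).diff
  have hclosed : IsClosed S := (hfin.isCompact_convexHull ℝ).isClosed
  -- S is nonempty
  have hne : S.Nonempty := by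
    obtain ⟨j, hj⟩ : ∃ j : Fin n, j ≠ k := by
      have : Nontrivial (Fin n) := Fin.nontrivial_iff_two_le.mpr (by omega)
      exact exists_ne k
    exact ⟨v j, subset_convexHull ℝ _ ⟨⟨j, rfl⟩, fun h => hj (hinj h)⟩⟩
  have hδpos : 0 < Metric.infDist (v k) S :=
    (hclosed.notMem_iff_infDist_pos hne).mp (hext k)
  set δ := Metric.infDist (v k) S with hδ
  refine ⟨δ / 2, by linarith, fun u _ hu p hp hpu i hik => ?_⟩
  have hnonneg := hp.1
  have hsum : ∑ j, p j = 1 := hp.2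
  set s := ∑ j ∈ Finset.univ.erase k, p j with hsdef
  have hs_nonneg : 0 ≤ s := Finset.sum_nonneg fun j _ => hnonneg j
  have hsk : p k + s = 1 := by
    rw [hsdef, Finset.add_sum_erase _ _ (Finset.mem_univ k)]
    exact hsum
  have hpi_le : p i ≤ s :=
    Finset.single_le_sum (fun j _ => hnonneg j)
      (Finset.mem_erase.mpr ⟨hik, Finset.mem_univ i⟩)
  rcases eq_or_lt_of_le hs_nonneg with h0 | hspos
  · have : p i ≤ 0 := h0 ▸ hpi_le
    have hpi0 : p i = 0 := le_antisymm this (hnonneg i)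
    have : p k = 1 := by linarith [hsk, h0]
    rw [hpi0, this]; norm_num
  · -- q is the renormalized combination of the other vertices
    set q : EuclideanSpace ℝ (Fin d) :=
      (Finset.univ.erase k).centerMass p v with hq
    have hqS : q ∈ S := by
      apply Finset.centerMass_mem_convexHull
      · exact fun j _ => hnonneg j
      · exact hspos
      · intro j hj
        exact ⟨⟨j, rfl⟩, fun h => (Finset.mem_erase.mp hj).1 (hinj h)⟩
    have hqsum : s • q = ∑ j ∈ Finset.univ.erase k, p j • v j := by
      rw [hq, Finset.centerMass, ← hsdef, smul_smul, mul_inv_cancel₀ (ne_of_gt hspos), one_smul]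
    have hdiff : u - v k = s • (q - v k) := by
      have hu' : u = p k • v k + s • q := by
        rw [hqsum, ← hpu, ← Finset.add_sum_erase _ (fun j => p j • v j) (Finset.mem_univ k)]
      have hpk : p k = 1 - s := by linarith
      rw [hu', smul_sub, hpk, sub_smul, one_smul]
      abel
    have hnorm : ‖u - v k‖ = s * ‖q - v k‖ := by
      rw [hdiff, norm_smul, Real.norm_eq_abs, abs_of_pos hspos]
    have hdle : δ ≤ ‖q - v k‖ := by
      have := Metric.infDist_le_dist_of_mem (x := v k) hqS
      rwa [dist_eq_norm, ← norm_neg, neg_sub] at this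
    have : s * δ ≤ ‖u - v k‖ := by
      rw [hnorm]
      exact mul_le_mul_of_nonneg_left hdle hs_nonneg
    have hslt : s < 1 / 2 := by
      by_contra h
      push_neg at h
      have : (1 / 2 : ℝ) * δ ≤ s * δ := mul_le_mul_of_nonneg_right h (le_of_lt hδpos)
      linarith
    have : p k = 1 - s := by linarith
    linarith
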